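/- arXiv:1810.10491 — 8 statements merged into one kernel-verified Lean document; each statement's English description precedes it below -/
import Mathlib

section
/- Let G be a gyrogroup equipped with a gyronorm ‖·‖. Define d(x, y) = ‖⊖x ⊕ y‖ for all x, y ∈ G. Then d is a metric on G: d(x,y) ≥ 0 with equality iff x = y, d is symmetric, and d satisfies the triangle inequality. -/
/-- A gyrogroup: a set with a binary operation `add`, identity `e`, inversion `neg`,
and gyroautomorphisms `gyr` satisfying the gyrogroup axioms. -/
structure Gyrogroup (G : Type*) where
  add : G → G → G
  e : G
  neg : G → G
  gyr : G → G → G → G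
  e_add : ∀ a, add e a = a
  add_e : ∀ a, add a e = a
  neg_add : ∀ a, add (neg a) a = e
  add_neg : ∀ a, add a (neg a) = e
  gyr_bijective : ∀ a b, Function.Bijective (gyr a b)
  gyr_add : ∀ a b x y, gyr a b (add x y) = add (gyr a b x) (gyr a b y)
  left_gyroassoc : ∀ a b c, add a (add b c) = add (add a b) (gyr a b c)
  left_loop : ∀ a b, gyr (add a b) b = gyr a b

/-- A gyronorm on a gyrogroup. -/
structure Gyronorm {G : Type*} (gg : Gyrogroup G) where
  toFun : G → ℝ
  nonneg : ∀ x, 0 ≤ toFun x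
  eq_zero_iff : ∀ x, toFun x = 0 ↔ x = gg.e
  neg_eq : ∀ x, toFun (gg.neg x) = toFun x
  subadd : ∀ x y, toFun (gg.add x y) ≤ toFun x + toFun y
  gyr_eq : ∀ a b x, toFun (gg.gyr a b x) = toFun x


namespace Gyrogroup

variable {G : Type*} (gg : Gyrogroup G)

lemma left_cancel {a x y : G} (h : gg.add a x = gg.add a y) : x = y := by
  have h2 : gg.add (gg.neg a) (gg.add a x) = gg.add (gg.neg a) (gg.add a y) := by rw [h]
  rw [gg.left_gyroassoc, gg.left_gyroassoc, gg.neg_add, gg.e_add, gg.e_add] at h2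
  exact (gg.gyr_bijective (gg.neg a) a).1 h2

lemma gyr_e (a c : G) : gg.gyr gg.e a c = c := by
  have := gg.left_gyroassoc gg.e a c
  rw [gg.e_add, gg.e_add] at this
  exact (gg.left_cancel this.symm)

lemma neg_add_add (a x : G) : gg.add (gg.neg a) (gg.add a x) = x := by
  rw [gg.left_gyroassoc, gg.neg_add, gg.e_add]
  have h := gg.left_loop (gg.neg a) a
  rw [gg.neg_add] at h
  rw [← h, gg.gyr_e]

lemma add_neg_add (a x : G) : gg.add a (gg.add (gg.neg a) x) = x := by
  rw [gg.left_gyroassoc, gg.add_neg, gg.e_add]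
  have h := gg.left_loop a (gg.neg a)
  rw [gg.add_neg] at h
  rw [← h, gg.gyr_e]

lemma neg_neg (a : G) : gg.neg (gg.neg a) = a :=
  gg.left_cancel (x := gg.neg (gg.neg a)) (y := a)
    (by rw [gg.add_neg, gg.neg_add])

lemma neg_add' (a b : G) :
    gg.neg (gg.add a b) = gg.gyr a b (gg.add (gg.neg b) (gg.neg a)) := by
  have h : gg.add (gg.add a b) (gg.gyr a b (gg.add (gg.neg b) (gg.neg a))) = gg.e := by
    rw [← gg.left_gyroassoc, gg.add_neg_add, gg.add_neg]
  have := congrArg (gg.add (gg.neg (gg.add a b))) h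
  rw [gg.neg_add_add, gg.add_e] at this
  exact this.symm

end Gyrogroup

/-- The gyronorm metric `d(x,y) = ‖⊖x ⊕ y‖` is a metric: nonnegative, vanishing
exactly on the diagonal, symmetric, and satisfying the triangle inequality. -/
theorem gyronorm_metric {G : Type*} (gg : Gyrogroup G) (nm : Gyronorm gg)
    (d : G → G → ℝ) (hd : ∀ x y, d x y = nm.toFun (gg.add (gg.neg x) y)) :
    (∀ x y, 0 ≤ d x y) ∧
    (∀ x y, d x y = 0 ↔ x = y) ∧
    (∀ x y, d x y = d y x) ∧
    (∀ x y z, d x z ≤ d x y + d y z) := by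
  refine ⟨fun x y => by rw [hd]; exact nm.nonneg _, fun x y => ?_, fun x y => ?_, fun x y z => ?_⟩
  · rw [hd, nm.eq_zero_iff]
    constructor
    · intro h
      have := congrArg (gg.add x) h
      rw [gg.add_neg_add, gg.add_e] at this
      exact this.symm
    · rintro rfl; exact gg.neg_add x
  · rw [hd, hd, ← nm.neg_eq, gg.neg_add', nm.gyr_eq, gg.neg_neg]
  · rw [hd, hd, hd]
    have key : gg.add (gg.neg x) z
        = gg.add (gg.add (gg.neg x) y) (gg.gyr (gg.neg x) y (gg.add (gg.neg y) z)) := by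
      rw [← gg.left_gyroassoc, gg.add_neg_add]
    rw [key]
    calc nm.toFun _ ≤ nm.toFun (gg.add (gg.neg x) y)
          + nm.toFun (gg.gyr (gg.neg x) y (gg.add (gg.neg y) z)) := nm.subadd _ _
      _ = _ := by rw [nm.gyr_eq]
end

section
/- The function ‖v‖_E = tanh⁻¹(‖v‖) (inverse hyperbolic tangent of the Euclidean norm) is a gyronorm on the Einstein gyrogroup (𝔹, ⊕_E): it is nonnegative and vanishes exactly at 0, satisfies ‖−v‖_E = ‖v‖_E, satisfies the subadditivity tanh⁻¹‖u ⊕_E v‖ ≤ tanh⁻¹‖u‖ + tanh⁻¹‖v‖, and is invariant under the gyroautomorphisms: tanh⁻¹‖gyr[u,v]w‖ = tanh⁻¹‖w‖ for all u, v, w ∈ 𝔹. -/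
open scoped RealInnerProductSpace

/-- The inverse hyperbolic tangent on `(-1, 1)`. -/
noncomputable def artanh (x : ℝ) : ℝ := (1 / 2) * Real.log ((1 + x) / (1 - x))

/-- The Lorentz factor `γ_u = 1/√(1 - ‖u‖²)`. -/
noncomputable def lorentzGamma {n : ℕ} (u : EuclideanSpace ℝ (Fin n)) : ℝ :=
  1 / Real.sqrt (1 - ‖u‖ ^ 2)

/-- Einstein addition on the open unit ball of `ℝⁿ`. -/
noncomputable def einsteinAdd {n : ℕ} (u v : EuclideanSpace ℝ (Fin n)) :
    EuclideanSpace ℝ (Fin n) :=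
  (1 / (1 + ⟪u, v⟫)) •
    (u + (1 / lorentzGamma u) • v +
      ((lorentzGamma u / (1 + lorentzGamma u)) * ⟪u, v⟫) • u)

/-- The gyroautomorphisms of the Einstein gyrogroup, via the gyrator identity
`gyr[u,v]w = ⊖(u ⊕ v) ⊕ (u ⊕ (v ⊕ w))`. -/
noncomputable def einsteinGyr {n : ℕ} (u v w : EuclideanSpace ℝ (Fin n)) :
    EuclideanSpace ℝ (Fin n) :=
  einsteinAdd (-(einsteinAdd u v)) (einsteinAdd u (einsteinAdd v w))

-- inner product bound
lemma my_cs {n : ℕ} (u v : EuclideanSpace ℝ (Fin n)) (hu : ‖u‖ < 1) (hv : ‖v‖ < 1) :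
    -1 < ⟪u, v⟫ ∧ ⟪u, v⟫ ≤ ‖u‖ * ‖v‖ := by
  have h1 := abs_real_inner_le_norm u v
  have h2 := real_inner_le_norm u v
  have h3 : ‖u‖ * ‖v‖ < 1 := by nlinarith [norm_nonneg u, norm_nonneg v]
  constructor
  · nlinarith [abs_le.mp h1]
  · exact h2

lemma eadd_eq {n : ℕ} (u v : EuclideanSpace ℝ (Fin n)) (hu : ‖u‖ < 1)
    (hA : 1 + ⟪u, v⟫ ≠ 0) :
    einsteinAdd u v =
      ((1 + Real.sqrt (1 - ‖u‖ ^ 2) + ⟪u, v⟫) /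
        ((1 + Real.sqrt (1 - ‖u‖ ^ 2)) * (1 + ⟪u, v⟫))) • u +
      (Real.sqrt (1 - ‖u‖ ^ 2) / (1 + ⟪u, v⟫)) • v := by
  have hp : (0:ℝ) < 1 - ‖u‖ ^ 2 := by nlinarith [norm_nonneg u]
  have hs : 0 < Real.sqrt (1 - ‖u‖ ^ 2) := Real.sqrt_pos.mpr hp
  have hs1 : 1 + Real.sqrt (1 - ‖u‖ ^ 2) ≠ 0 := by positivity
  unfold einsteinAdd lorentzGamma
  match_scalars <;> field_simp <;> ring

lemma key1 {n : ℕ} (u v : EuclideanSpace ℝ (Fin n)) (hu : ‖u‖ < 1) (hv : ‖v‖ < 1) :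
    (1 - ‖einsteinAdd u v‖ ^ 2) * (1 + ⟪u, v⟫) ^ 2 = (1 - ‖u‖ ^ 2) * (1 - ‖v‖ ^ 2) := by
  obtain ⟨hA1, _⟩ := my_cs u v hu hv
  have hA : 1 + ⟪u, v⟫ ≠ 0 := by linarith
  have hp : (0:ℝ) ≤ 1 - ‖u‖ ^ 2 := by nlinarith [norm_nonneg u]
  have hexp : ∀ (a b : ℝ), ‖a • u + b • v‖ ^ 2
      = a ^ 2 * ‖u‖ ^ 2 + 2 * (a * b) * ⟪u, v⟫ + b ^ 2 * ‖v‖ ^ 2 := by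
    intro a b
    rw [norm_add_sq_real, norm_smul, norm_smul, real_inner_smul_left,
      real_inner_smul_right]
    simp only [Real.norm_eq_abs, mul_pow, sq_abs]
    ring
  rw [eadd_eq u v hu hA, hexp]
  set s := Real.sqrt (1 - ‖u‖ ^ 2) with hsdef
  have hs : 0 < s := Real.sqrt_pos.mpr (by nlinarith [norm_nonneg u])
  have hs2 : s ^ 2 = 1 - ‖u‖ ^ 2 := Real.sq_sqrt hp
  have hnu : ‖u‖ ^ 2 = 1 - s ^ 2 := by linarith
  have hs1 : 1 + s ≠ 0 := by positivity
  set A := ⟪u, v⟫ with hAdef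
  set q := ‖v‖ ^ 2 with hqdef
  rw [hnu]
  field_simp
  ring

lemma ball_of_key1 {n : ℕ} (u v : EuclideanSpace ℝ (Fin n)) (hu : ‖u‖ < 1) (hv : ‖v‖ < 1) :
    ‖einsteinAdd u v‖ < 1 := by
  have h := key1 u v hu hv
  obtain ⟨hA1, _⟩ := my_cs u v hu hv
  have h2 : (0:ℝ) < (1 + ⟪u, v⟫) ^ 2 := pow_pos (by linarith) 2
  have h3a : (0:ℝ) < 1 - ‖u‖ ^ 2 := by nlinarith [norm_nonneg u]
  have h3b : (0:ℝ) < 1 - ‖v‖ ^ 2 := by nlinarith [norm_nonneg v]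
  have h3 : (0:ℝ) < (1 - ‖u‖ ^ 2) * (1 - ‖v‖ ^ 2) := mul_pos h3a h3b
  have h4 : ‖einsteinAdd u v‖ ^ 2 < 1 := by nlinarith
  nlinarith [norm_nonneg (einsteinAdd u v)]

set_option maxHeartbeats 1000000 in
lemma scalar_key2 (su sv A C D : ℝ) (hsu1 : 1+su ≠ 0) (hsv1 : 1+sv ≠ 0)
    (hA : 1+A ≠ 0) (hC : 1+C ≠ 0) (hD : 1+D ≠ 0) :
    (1+A)*(1+C)*(1+D) *
      (1 - ( ((1+su+A)/((1+su)*(1+A))) * ((1+su+D)/((1+su)*(1+D))) * (1-su^2)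
           + ((1+su+A)/((1+su)*(1+A))) * (su/(1+D)) * D
           + (su/(1+A)) * ((1+su+D)/((1+su)*(1+D))) * A
           + (su/(1+A)) * (su/(1+D)) * ((1+sv+C)/((1+sv)*(1+C))*(1-sv^2) + sv/(1+C)*C) ))
    = su^2 * sv^2 := by
  field_simp
  ring

set_option maxHeartbeats 1000000 in
lemma key2 {n : ℕ} (u v w : EuclideanSpace ℝ (Fin n))
    (hu : ‖u‖ < 1) (hv : ‖v‖ < 1) (hw : ‖w‖ < 1) :
    (1 + ⟪u, v⟫) * (1 + ⟪v, w⟫) * (1 + ⟪u, einsteinAdd v w⟫) *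
      (1 - ⟪einsteinAdd u v, einsteinAdd u (einsteinAdd v w)⟫)
    = (1 - ‖u‖ ^ 2) * (1 - ‖v‖ ^ 2) := by
  obtain ⟨hA1, _⟩ := my_cs u v hu hv
  obtain ⟨hC1, _⟩ := my_cs v w hv hw
  have hA : 1 + ⟪u, v⟫ ≠ 0 := by linarith
  have hC : 1 + ⟪v, w⟫ ≠ 0 := by linarith
  set x := einsteinAdd v w with hxdef
  have hx : ‖x‖ < 1 := ball_of_key1 v w hv hw
  obtain ⟨hD1, _⟩ := my_cs u x hu hx
  have hD : 1 + ⟪u, x⟫ ≠ 0 := by linarith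
  have hinner : ∀ a b c d : ℝ, ⟪a • u + b • v, c • u + d • x⟫
      = a * c * ‖u‖ ^ 2 + a * d * ⟪u, x⟫ + b * c * ⟪u, v⟫ + b * d * ⟪v, x⟫ := by
    intro a b c d
    simp only [inner_add_left, inner_add_right, real_inner_smul_left,
      real_inner_smul_right, real_inner_self_eq_norm_sq, real_inner_comm v u]
    ring
  have h2 : ⟪v, x⟫ = ((1 + Real.sqrt (1 - ‖v‖ ^ 2) + ⟪v, w⟫) /
        ((1 + Real.sqrt (1 - ‖v‖ ^ 2)) * (1 + ⟪v, w⟫))) * ‖v‖ ^ 2 +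
      (Real.sqrt (1 - ‖v‖ ^ 2) / (1 + ⟪v, w⟫)) * ⟪v, w⟫ := by
    rw [hxdef, eadd_eq v w hv hC]
    simp only [inner_add_right, real_inner_smul_right, real_inner_self_eq_norm_sq]
  rw [eadd_eq u v hu hA, eadd_eq u x hu hD, hinner, h2]
  set su := Real.sqrt (1 - ‖u‖ ^ 2) with hsudef
  set sv := Real.sqrt (1 - ‖v‖ ^ 2) with hsvdef
  have hsu : 0 < su := Real.sqrt_pos.mpr (by nlinarith [norm_nonneg u])
  have hsv : 0 < sv := Real.sqrt_pos.mpr (by nlinarith [norm_nonneg v])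
  have hsu2 : su ^ 2 = 1 - ‖u‖ ^ 2 := Real.sq_sqrt (by nlinarith [norm_nonneg u])
  have hsv2 : sv ^ 2 = 1 - ‖v‖ ^ 2 := Real.sq_sqrt (by nlinarith [norm_nonneg v])
  have hnu : ‖u‖ ^ 2 = 1 - su ^ 2 := by linarith
  have hnv : ‖v‖ ^ 2 = 1 - sv ^ 2 := by linarith
  have hsu1 : 1 + su ≠ 0 := by positivity
  have hsv1 : 1 + sv ≠ 0 := by positivity
  rw [hnu, hnv]
  linear_combination scalar_key2 su sv ⟪u, v⟫ ⟪v, w⟫ ⟪u, x⟫ hsu1 hsv1 hA hC hD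

lemma norm_gyr {n : ℕ} (u v w : EuclideanSpace ℝ (Fin n))
    (hu : ‖u‖ < 1) (hv : ‖v‖ < 1) (hw : ‖w‖ < 1) :
    ‖einsteinGyr u v w‖ = ‖w‖ := by
  set a := einsteinAdd u v with hadef
  set x := einsteinAdd v w with hxdef
  set b := einsteinAdd u x with hbdef
  have ha : ‖a‖ < 1 := ball_of_key1 u v hu hv
  have hx : ‖x‖ < 1 := ball_of_key1 v w hv hw
  have hb : ‖b‖ < 1 := ball_of_key1 u x hu hx
  have hna : ‖-a‖ < 1 := by rwa [norm_neg]
  have s0 : (1 - ‖einsteinAdd (-a) b‖ ^ 2) * (1 + ⟪-a, b⟫) ^ 2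
      = (1 - ‖-a‖ ^ 2) * (1 - ‖b‖ ^ 2) := key1 (-a) b hna hb
  rw [norm_neg, inner_neg_left] at s0
  have s1 : (1 - ‖a‖ ^ 2) * (1 + ⟪u, v⟫) ^ 2 = (1 - ‖u‖ ^ 2) * (1 - ‖v‖ ^ 2) :=
    key1 u v hu hv
  have s2 : (1 - ‖x‖ ^ 2) * (1 + ⟪v, w⟫) ^ 2 = (1 - ‖v‖ ^ 2) * (1 - ‖w‖ ^ 2) :=
    key1 v w hv hw
  have s3 : (1 - ‖b‖ ^ 2) * (1 + ⟪u, x⟫) ^ 2 = (1 - ‖u‖ ^ 2) * (1 - ‖x‖ ^ 2) :=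
    key1 u x hu hx
  have s4 : (1 + ⟪u, v⟫) * (1 + ⟪v, w⟫) * (1 + ⟪u, x⟫) * (1 - ⟪a, b⟫)
      = (1 - ‖u‖ ^ 2) * (1 - ‖v‖ ^ 2) := key2 u v w hu hv hw
  obtain ⟨hE1, hE2⟩ := my_cs a b ha hb
  have hab1 : ‖a‖ * ‖b‖ < 1 := by nlinarith [norm_nonneg a, norm_nonneg b]
  have hE : 0 < 1 - ⟪a, b⟫ := by nlinarith
  have hg : einsteinGyr u v w = einsteinAdd (-a) b := rfl
  set g := ‖einsteinAdd (-a) b‖ with hgdef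
  set E := ⟪a, b⟫
  set A := ⟪u, v⟫
  set C := ⟪v, w⟫
  set D := ⟪u, x⟫
  have big : (1 - g ^ 2) * ((1 - E) * (1 + A) * (1 + C) * (1 + D)) ^ 2
      = (1 - ‖w‖ ^ 2) * ((1 - E) * (1 + A) * (1 + C) * (1 + D)) ^ 2 := by
    have hs0 : (1 - g ^ 2) * (1 - E) ^ 2 = (1 - ‖a‖ ^ 2) * (1 - ‖b‖ ^ 2) := by
      have : (1 + -E) = (1 - E) := by ring
      linear_combination s0
    linear_combination ((1 + A) * (1 + C) * (1 + D)) ^ 2 * hs0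
      + (1 - ‖b‖ ^ 2) * (1 + C) ^ 2 * (1 + D) ^ 2 * s1
      + (1 - ‖u‖ ^ 2) * (1 - ‖v‖ ^ 2) * (1 + C) ^ 2 * s3
      + (1 - ‖u‖ ^ 2) * (1 - ‖v‖ ^ 2) * (1 - ‖u‖ ^ 2) * s2
      - (1 - ‖w‖ ^ 2) * ((1 - E) * (1 + A) * (1 + C) * (1 + D)
          + (1 - ‖u‖ ^ 2) * (1 - ‖v‖ ^ 2)) * s4
  obtain ⟨hA1, _⟩ := my_cs u v hu hv
  obtain ⟨hC1, _⟩ := my_cs v w hv hw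
  obtain ⟨hD1, _⟩ := my_cs u x hu hx
  have hX : ((1 - E) * (1 + A) * (1 + C) * (1 + D)) ^ 2 ≠ 0 := by
    have h : (0:ℝ) < (1 - E) * (1 + A) * (1 + C) * (1 + D) :=
      mul_pos (mul_pos (mul_pos hE (by linarith)) (by linarith)) (by linarith)
    exact ne_of_gt (pow_pos h 2)
  have hgw : g ^ 2 = ‖w‖ ^ 2 := by
    have := mul_right_cancel₀ hX big
    linarith
  rw [hg]
  rw [← Real.sqrt_sq (norm_nonneg (einsteinAdd (-a) b)), hgw,
    Real.sqrt_sq (norm_nonneg w)]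

lemma artanh_nonneg' {x : ℝ} (h0 : 0 ≤ x) (h1 : x < 1) : 0 ≤ artanh x := by
  unfold artanh
  have hr : (1:ℝ) ≤ (1 + x) / (1 - x) := by
    rw [le_div_iff₀ (by linarith)]; linarith
  have := Real.log_nonneg hr
  linarith

lemma artanh_eq_zero_iff' {x : ℝ} (h0 : 0 ≤ x) (h1 : x < 1) : artanh x = 0 ↔ x = 0 := by
  unfold artanh
  constructor
  · intro h
    have hlog : Real.log ((1 + x) / (1 - x)) = 0 := by linarith
    have hpos : (0:ℝ) < (1 + x) / (1 - x) := div_pos (by linarith) (by linarith)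
    rcases Real.log_eq_zero.mp hlog with h' | h' | h'
    · exfalso; rw [h'] at hpos; exact lt_irrefl 0 hpos
    · have := (div_eq_one_iff_eq (by linarith : (1:ℝ) - x ≠ 0)).mp h'
      linarith
    · exfalso; rw [h'] at hpos; linarith
  · intro h; subst h; norm_num

lemma artanh_mono' {a b : ℝ} (ha : -1 < a) (hab : a ≤ b) (hb : b < 1) :
    artanh a ≤ artanh b := by
  unfold artanh
  have h1 : (0:ℝ) < 1 - a := by linarith
  have h2 : (0:ℝ) < 1 - b := by linarith
  have h3 : (0:ℝ) < 1 + a := by linarith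
  have hle : (1 + a) / (1 - a) ≤ (1 + b) / (1 - b) := by
    rw [div_le_div_iff₀ h1 h2]; nlinarith
  have hpos : (0:ℝ) < (1 + a) / (1 - a) := div_pos h3 h1
  have := Real.log_le_log hpos hle
  linarith

lemma artanh_add' {x y : ℝ} (hx0 : 0 ≤ x) (hx : x < 1) (hy0 : 0 ≤ y) (hy : y < 1) :
    artanh x + artanh y = artanh ((x + y) / (1 + x * y)) := by
  unfold artanh
  have hxy : (0:ℝ) < 1 + x * y := by nlinarith
  have h1x : (0:ℝ) < 1 - x := by linarith
  have h1y : (0:ℝ) < 1 - y := by linarith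
  have hrx : (0:ℝ) < (1 + x) / (1 - x) := div_pos (by linarith) h1x
  have hry : (0:ℝ) < (1 + y) / (1 - y) := div_pos (by linarith) h1y
  have e1 : 1 + (x + y) / (1 + x * y) = (1 + x) * (1 + y) / (1 + x * y) := by
    field_simp; ring
  have e2 : 1 - (x + y) / (1 + x * y) = (1 - x) * (1 - y) / (1 + x * y) := by
    field_simp; ring
  have key : (1 + (x + y) / (1 + x * y)) / (1 - (x + y) / (1 + x * y))
      = ((1 + x) / (1 - x)) * ((1 + y) / (1 - y)) := by
    have n1 : (1:ℝ) + x * y ≠ 0 := ne_of_gt hxy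
    have n2 : (1:ℝ) - x ≠ 0 := ne_of_gt h1x
    have n3 : (1:ℝ) - y ≠ 0 := ne_of_gt h1y
    rw [e1, e2]
    field_simp
  rw [key, Real.log_mul (ne_of_gt hrx) (ne_of_gt hry)]
  ring

/-- The function `‖v‖_E = tanh⁻¹‖v‖` is a gyronorm on the Einstein gyrogroup
`(𝔹, ⊕_E)`: it is nonnegative on `𝔹` and vanishes exactly at `0`, is invariant under
negation, is subadditive with respect to Einstein addition, and is invariant under
the gyroautomorphisms. -/
theorem artanh_norm_is_gyronorm_einstein (n : ℕ) :
    (∀ v : EuclideanSpace ℝ (Fin n), ‖v‖ < 1 → 0 ≤ artanh ‖v‖) ∧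
    (∀ v : EuclideanSpace ℝ (Fin n), ‖v‖ < 1 → (artanh ‖v‖ = 0 ↔ v = 0)) ∧
    (∀ v : EuclideanSpace ℝ (Fin n), ‖v‖ < 1 → artanh ‖-v‖ = artanh ‖v‖) ∧
    (∀ u v : EuclideanSpace ℝ (Fin n), ‖u‖ < 1 → ‖v‖ < 1 →
      artanh ‖einsteinAdd u v‖ ≤ artanh ‖u‖ + artanh ‖v‖) ∧
    (∀ u v w : EuclideanSpace ℝ (Fin n), ‖u‖ < 1 → ‖v‖ < 1 → ‖w‖ < 1 →
      artanh ‖einsteinGyr u v w‖ = artanh ‖w‖) := by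
  refine ⟨fun v hv => artanh_nonneg' (norm_nonneg v) hv,
    fun v hv => (artanh_eq_zero_iff' (norm_nonneg v) hv).trans norm_eq_zero,
    fun v _ => by rw [norm_neg],
    fun u v hu hv => ?_,
    fun u v w hu hv hw => by rw [norm_gyr u v w hu hv hw]⟩
  -- subadditivity
  have k := key1 u v hu hv
  obtain ⟨hA1, hA2⟩ := my_cs u v hu hv
  have hN : ‖einsteinAdd u v‖ < 1 := ball_of_key1 u v hu hv
  set N := ‖einsteinAdd u v‖ with hNdef
  set a := ‖u‖ with hadef
  set b := ‖v‖ with hbdef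
  have ha0 : 0 ≤ a := norm_nonneg u
  have hb0 : 0 ≤ b := norm_nonneg v
  have hab : (0:ℝ) < 1 + a * b := by nlinarith
  have ht1 : (a + b) / (1 + a * b) < 1 := by
    rw [div_lt_one hab]; nlinarith
  have ht0 : 0 ≤ (a + b) / (1 + a * b) := div_nonneg (by linarith) (le_of_lt hab)
  have hident : (1 - ((a + b) / (1 + a * b)) ^ 2) * (1 + a * b) ^ 2
      = (1 - a ^ 2) * (1 - b ^ 2) := by
    field_simp; ring
  have hsq : N ^ 2 ≤ ((a + b) / (1 + a * b)) ^ 2 := by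
    have hN2 : (0:ℝ) ≤ 1 - N ^ 2 := by nlinarith [norm_nonneg (einsteinAdd u v)]
    have h2 : (1 + ⟪u, v⟫) ^ 2 ≤ (1 + a * b) ^ 2 := by nlinarith
    have h3 : (1 - ((a + b) / (1 + a * b)) ^ 2) * (1 + a * b) ^ 2
        ≤ (1 - N ^ 2) * (1 + a * b) ^ 2 := by
      nlinarith [mul_nonneg hN2 (by linarith : (0:ℝ) ≤ (1 + a * b) ^ 2 - (1 + ⟪u, v⟫) ^ 2)]
    have h4 := le_of_mul_le_mul_right h3 (pow_pos hab 2)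
    linarith
  have hNle : N ≤ (a + b) / (1 + a * b) := by
    nlinarith [norm_nonneg (einsteinAdd u v)]
  calc artanh N ≤ artanh ((a + b) / (1 + a * b)) :=
        artanh_mono' (by nlinarith [norm_nonneg (einsteinAdd u v)]) hNle ht1
    _ = artanh a + artanh b := (artanh_add' ha0 (by exact hu) hb0 hv).symm
end

section
/- The Euclidean norm is a gyronorm on the Einstein gyrogroup; in particular, ‖u ⊕_E v‖ ≤ (‖u‖ + ‖v‖)/(1 + ‖u‖‖v‖) ≤ ‖u‖ + ‖v‖ for all u, v ∈ 𝔹, and consequently the Einstein gyrometric d_e(u, v) = ‖(−u) ⊕_E v‖ is a metric on the open unit ball 𝔹 of ℝⁿ. -/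
open scoped RealInnerProductSpace

section Aux

variable {n : ℕ}

lemma sqrt_pos' (u : EuclideanSpace ℝ (Fin n)) (hu : ‖u‖ < 1) :
    0 < Real.sqrt (1 - ‖u‖ ^ 2) := by
  apply Real.sqrt_pos.2; nlinarith [norm_nonneg u]

lemma inner_abs_lt (u v : EuclideanSpace ℝ (Fin n)) (hu : ‖u‖ < 1) (hv : ‖v‖ < 1) :
    |⟪u, v⟫| < 1 := by
  calc |⟪u, v⟫| ≤ ‖u‖ * ‖v‖ := abs_real_inner_le_norm u v
    _ < 1 := by nlinarith [norm_nonneg u, norm_nonneg v]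

lemma one_add_inner_pos (u v : EuclideanSpace ℝ (Fin n)) (hu : ‖u‖ < 1) (hv : ‖v‖ < 1) :
    0 < 1 + ⟪u, v⟫ := by
  have := inner_abs_lt u v hu hv
  have := abs_lt.1 this
  linarith [this.1]

lemma einsteinAdd_eq (u v : EuclideanSpace ℝ (Fin n)) (hu : ‖u‖ < 1) (hv : ‖v‖ < 1) :
    einsteinAdd u v =
      ((1 + Real.sqrt (1 - ‖u‖ ^ 2) + ⟪u, v⟫) /
          ((1 + ⟪u, v⟫) * (1 + Real.sqrt (1 - ‖u‖ ^ 2)))) • u +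
        (Real.sqrt (1 - ‖u‖ ^ 2) / (1 + ⟪u, v⟫)) • v := by
  have hs := sqrt_pos' u hu
  have hp := one_add_inner_pos u v hu hv
  set s := Real.sqrt (1 - ‖u‖ ^ 2) with hsdef
  unfold einsteinAdd lorentzGamma
  rw [← hsdef]
  match_scalars
  · field_simp
    ring
  · field_simp

lemma L1 (u v : EuclideanSpace ℝ (Fin n)) (hu : ‖u‖ < 1) (hv : ‖v‖ < 1) :
    (1 - ‖einsteinAdd u v‖ ^ 2) * (1 + ⟪u, v⟫) ^ 2 =
      (1 - ‖u‖ ^ 2) * (1 - ‖v‖ ^ 2) := by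
  have hs := sqrt_pos' u hu
  have hp := one_add_inner_pos u v hu hv
  have hs2 : ‖u‖ ^ 2 = 1 - Real.sqrt (1 - ‖u‖ ^ 2) ^ 2 := by
    rw [Real.sq_sqrt (by nlinarith [norm_nonneg u])]; ring
  rw [einsteinAdd_eq u v hu hv]
  set s := Real.sqrt (1 - ‖u‖ ^ 2) with hsdef
  rw [norm_add_sq_real, norm_smul, norm_smul, real_inner_smul_left, real_inner_smul_right,
    mul_pow, mul_pow, Real.norm_eq_abs, Real.norm_eq_abs, sq_abs, sq_abs]
  rw [hs2]
  have h1 : (0:ℝ) < 1 + s := by linarith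
  generalize ⟪u, v⟫ = p at *
  generalize ‖v‖ ^ 2 = b at *
  have hp' : (1:ℝ) + p ≠ 0 := ne_of_gt hp
  have h1' : (1:ℝ) + s ≠ 0 := ne_of_gt h1
  field_simp
  ring

lemma eadd_norm_lt_one (u v : EuclideanSpace ℝ (Fin n)) (hu : ‖u‖ < 1) (hv : ‖v‖ < 1) :
    ‖einsteinAdd u v‖ < 1 := by
  have h := L1 u v hu hv
  have hp := one_add_inner_pos u v hu hv
  have hA : ‖u‖ ^ 2 < 1 := by nlinarith [norm_nonneg u]
  have hB : ‖v‖ ^ 2 < 1 := by nlinarith [norm_nonneg v]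
  have h2 : 0 < 1 - ‖einsteinAdd u v‖ ^ 2 := by nlinarith [sq_nonneg (1 + ⟪u, v⟫)]
  nlinarith [norm_nonneg (einsteinAdd u v)]

set_option maxHeartbeats 1000000 in
lemma scalarJ (A B p q su sv r : ℝ) (hA : su ^ 2 = 1 - A) (hB : sv ^ 2 = 1 - B)
    (hsu : 0 < su) (hsv : 0 < sv) (hp : (0:ℝ) < 1 + p) (hq : (0:ℝ) < 1 + q)
    (hr : (0:ℝ) < 1 + r) :
    (1 - (((1 + su + p) / ((1 + p) * (1 + su))) * ((1 + su + r) / ((1 + r) * (1 + su))) * A +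
        ((1 + su + p) / ((1 + p) * (1 + su))) * (su / (1 + r)) * r +
        (su / (1 + p)) * ((1 + su + r) / ((1 + r) * (1 + su))) * p +
        (su / (1 + p)) * (su / (1 + r)) *
          (((1 + sv + q) / ((1 + q) * (1 + sv))) * B + (sv / (1 + q)) * q))) *
      ((1 + p) * (1 + q) * (1 + r)) = (1 - A) * (1 - B) := by
  have hA' : A = 1 - su ^ 2 := by linarith
  have hB' : B = 1 - sv ^ 2 := by linarith
  subst hA' hB'
  have e1 : (1:ℝ) + p ≠ 0 := ne_of_gt hp
  have e2 : (1:ℝ) + q ≠ 0 := ne_of_gt hq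
  have e3 : (1:ℝ) + su ≠ 0 := by positivity
  have e4 : (1:ℝ) + sv ≠ 0 := by positivity
  have e5 : (1:ℝ) + r ≠ 0 := ne_of_gt hr
  field_simp
  ring

set_option maxHeartbeats 1000000 in
lemma Jlem (u v w : EuclideanSpace ℝ (Fin n)) (hu : ‖u‖ < 1) (hv : ‖v‖ < 1)
    (hw : ‖w‖ < 1) :
    (1 - ⟪einsteinAdd u v, einsteinAdd u (einsteinAdd v w)⟫) *
      ((1 + ⟪u, v⟫) * (1 + ⟪v, w⟫) * (1 + ⟪u, einsteinAdd v w⟫)) =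
    (1 - ‖u‖ ^ 2) * (1 - ‖v‖ ^ 2) := by
  have hm1 : ‖einsteinAdd v w‖ < 1 := eadd_norm_lt_one v w hv hw
  have hsu := sqrt_pos' u hu
  have hsv := sqrt_pos' v hv
  set su := Real.sqrt (1 - ‖u‖ ^ 2) with hsudef
  set sv := Real.sqrt (1 - ‖v‖ ^ 2) with hsvdef
  have hA : su ^ 2 = 1 - ‖u‖ ^ 2 := Real.sq_sqrt (by nlinarith [norm_nonneg u])
  have hB : sv ^ 2 = 1 - ‖v‖ ^ 2 := Real.sq_sqrt (by nlinarith [norm_nonneg v])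
  have hp := one_add_inner_pos u v hu hv
  have hq := one_add_inner_pos v w hv hw
  have hr := one_add_inner_pos u (einsteinAdd v w) hu hm1
  have hvm : ⟪v, einsteinAdd v w⟫ =
      ((1 + sv + ⟪v, w⟫) / ((1 + ⟪v, w⟫) * (1 + sv))) * ‖v‖ ^ 2 +
        (sv / (1 + ⟪v, w⟫)) * ⟪v, w⟫ := by
    rw [einsteinAdd_eq v w hv hw]
    simp only [inner_add_right, real_inner_smul_right, real_inner_self_eq_norm_sq]
    rw [← hsvdef]
  have hip : ⟪einsteinAdd u v, einsteinAdd u (einsteinAdd v w)⟫ =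
      ((1 + su + ⟪u, v⟫) / ((1 + ⟪u, v⟫) * (1 + su))) *
          ((1 + su + ⟪u, einsteinAdd v w⟫) /
            ((1 + ⟪u, einsteinAdd v w⟫) * (1 + su))) * ‖u‖ ^ 2 +
        ((1 + su + ⟪u, v⟫) / ((1 + ⟪u, v⟫) * (1 + su))) *
          (su / (1 + ⟪u, einsteinAdd v w⟫)) * ⟪u, einsteinAdd v w⟫ +
        (su / (1 + ⟪u, v⟫)) *
          ((1 + su + ⟪u, einsteinAdd v w⟫) /
            ((1 + ⟪u, einsteinAdd v w⟫) * (1 + su))) * ⟪u, v⟫ +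
        (su / (1 + ⟪u, v⟫)) * (su / (1 + ⟪u, einsteinAdd v w⟫)) *
          (((1 + sv + ⟪v, w⟫) / ((1 + ⟪v, w⟫) * (1 + sv))) * ‖v‖ ^ 2 +
            (sv / (1 + ⟪v, w⟫)) * ⟪v, w⟫) := by
    rw [einsteinAdd_eq u v hu hv, einsteinAdd_eq u (einsteinAdd v w) hu hm1]
    simp only [inner_add_left, inner_add_right, real_inner_smul_left, real_inner_smul_right,
      real_inner_self_eq_norm_sq, real_inner_comm v u]
    rw [hvm]
    ring
  rw [hip]
  exact scalarJ (‖u‖ ^ 2) (‖v‖ ^ 2) ⟪u, v⟫ ⟪v, w⟫ su sv ⟪u, einsteinAdd v w⟫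
    hA hB hsu hsv hp hq hr

lemma gyr_norm (u v w : EuclideanSpace ℝ (Fin n)) (hu : ‖u‖ < 1) (hv : ‖v‖ < 1)
    (hw : ‖w‖ < 1) : ‖einsteinGyr u v w‖ = ‖w‖ := by
  have ha1 : ‖einsteinAdd u v‖ < 1 := eadd_norm_lt_one u v hu hv
  have hm1 : ‖einsteinAdd v w‖ < 1 := eadd_norm_lt_one v w hv hw
  have hb1 : ‖einsteinAdd u (einsteinAdd v w)‖ < 1 := eadd_norm_lt_one u _ hu hm1
  have hna : ‖-(einsteinAdd u v)‖ < 1 := by rwa [norm_neg]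
  have w1 := L1 (-(einsteinAdd u v)) (einsteinAdd u (einsteinAdd v w)) hna hb1
  rw [norm_neg, inner_neg_left] at w1
  have e2 := L1 u v hu hv
  have e3 := L1 v w hv hw
  have e4 := L1 u (einsteinAdd v w) hu hm1
  have e5 := Jlem u v w hu hv hw
  have hp := one_add_inner_pos u v hu hv
  have hq := one_add_inner_pos v w hv hw
  have hr := one_add_inner_pos u (einsteinAdd v w) hu hm1
  have hX : 0 < 1 - ⟪einsteinAdd u v, einsteinAdd u (einsteinAdd v w)⟫ := by
    have h := inner_abs_lt (einsteinAdd u v) (einsteinAdd u (einsteinAdd v w)) ha1 hb1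
    have := abs_lt.1 h
    linarith [this.2]
  set g := ‖einsteinGyr u v w‖ with hgdef
  have hgd : einsteinGyr u v w =
      einsteinAdd (-(einsteinAdd u v)) (einsteinAdd u (einsteinAdd v w)) := rfl
  rw [hgd] at hgdef
  have hK : ((1 - ⟪einsteinAdd u v, einsteinAdd u (einsteinAdd v w)⟫) *
      ((1 + ⟪u, v⟫) * (1 + ⟪v, w⟫) * (1 + ⟪u, einsteinAdd v w⟫))) ≠ 0 := by positivity
  have key : (1 - g ^ 2) *
      ((1 - ⟪einsteinAdd u v, einsteinAdd u (einsteinAdd v w)⟫) *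
        ((1 + ⟪u, v⟫) * (1 + ⟪v, w⟫) * (1 + ⟪u, einsteinAdd v w⟫))) ^ 2 =
      (1 - ‖w‖ ^ 2) *
      ((1 - ⟪einsteinAdd u v, einsteinAdd u (einsteinAdd v w)⟫) *
        ((1 + ⟪u, v⟫) * (1 + ⟪v, w⟫) * (1 + ⟪u, einsteinAdd v w⟫))) ^ 2 := by
    rw [hgdef]
    linear_combination
      ((1 + ⟪u, v⟫) * (1 + ⟪v, w⟫) * (1 + ⟪u, einsteinAdd v w⟫)) ^ 2 * w1 +
      (1 + ⟪v, w⟫) ^ 2 * (1 + ⟪u, einsteinAdd v w⟫) ^ 2 *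
        (1 - ‖einsteinAdd u (einsteinAdd v w)‖ ^ 2) * e2 +
      (1 - ‖u‖ ^ 2) ^ 2 * (1 - ‖v‖ ^ 2) * e3 +
      (1 - ‖u‖ ^ 2) * (1 - ‖v‖ ^ 2) * (1 + ⟪v, w⟫) ^ 2 * e4 -
      (1 - ‖w‖ ^ 2) *
        ((1 - ⟪einsteinAdd u v, einsteinAdd u (einsteinAdd v w)⟫) *
          ((1 + ⟪u, v⟫) * (1 + ⟪v, w⟫) * (1 + ⟪u, einsteinAdd v w⟫)) +
          (1 - ‖u‖ ^ 2) * (1 - ‖v‖ ^ 2)) * e5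
  have h2 : g ^ 2 = ‖w‖ ^ 2 := by
    have := mul_right_cancel₀ (pow_ne_zero 2 hK) key
    linarith
  rw [← Real.sqrt_sq (norm_nonneg w), ← h2, hgdef, Real.sqrt_sq (norm_nonneg _)]

lemma part1a (u v : EuclideanSpace ℝ (Fin n)) (hu : ‖u‖ < 1) (hv : ‖v‖ < 1) :
    ‖einsteinAdd u v‖ ≤ (‖u‖ + ‖v‖) / (1 + ‖u‖ * ‖v‖) := by
  have hab : (0:ℝ) ≤ ‖u‖ * ‖v‖ := by positivity
  have h1ab : (0:ℝ) < 1 + ‖u‖ * ‖v‖ := by linarith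
  have hL := L1 u v hu hv
  have hp := one_add_inner_pos u v hu hv
  have hple : ⟪u, v⟫ ≤ ‖u‖ * ‖v‖ := real_inner_le_norm u v
  have hT0 : (0:ℝ) ≤ (‖u‖ + ‖v‖) / (1 + ‖u‖ * ‖v‖) := by positivity
  have hT2 : ((‖u‖ + ‖v‖) / (1 + ‖u‖ * ‖v‖)) ^ 2 * (1 + ‖u‖ * ‖v‖) ^ 2 =
      (1 + ‖u‖ * ‖v‖) ^ 2 - (1 - ‖u‖ ^ 2) * (1 - ‖v‖ ^ 2) := by
    field_simp
    ring
  have hA : ‖u‖ ^ 2 < 1 := by nlinarith [norm_nonneg u]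
  have hB : ‖v‖ ^ 2 < 1 := by nlinarith [norm_nonneg v]
  have h4 : (0:ℝ) ≤ (1 - ‖u‖ ^ 2) * (1 - ‖v‖ ^ 2) :=
    mul_nonneg (by linarith) (by linarith)
  have h5 : (1 + ⟪u, v⟫) ^ 2 ≤ (1 + ‖u‖ * ‖v‖) ^ 2 := by nlinarith
  have h6 : ((‖u‖ + ‖v‖) / (1 + ‖u‖ * ‖v‖)) ^ 2 * ((1 + ⟪u, v⟫) ^ 2 * (1 + ‖u‖ * ‖v‖) ^ 2) -
      ‖einsteinAdd u v‖ ^ 2 * ((1 + ⟪u, v⟫) ^ 2 * (1 + ‖u‖ * ‖v‖) ^ 2) =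
      (1 - ‖u‖ ^ 2) * (1 - ‖v‖ ^ 2) * ((1 + ‖u‖ * ‖v‖) ^ 2 - (1 + ⟪u, v⟫) ^ 2) := by
    linear_combination (1 + ⟪u, v⟫) ^ 2 * hT2 + (1 + ‖u‖ * ‖v‖) ^ 2 * hL
  have h7 : ‖einsteinAdd u v‖ ^ 2 ≤ ((‖u‖ + ‖v‖) / (1 + ‖u‖ * ‖v‖)) ^ 2 := by
    nlinarith [h6, mul_nonneg h4 (sub_nonneg.2 h5),
      mul_pos (mul_pos hp hp) (mul_pos h1ab h1ab)]
  calc ‖einsteinAdd u v‖ = Real.sqrt (‖einsteinAdd u v‖ ^ 2) :=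
        (Real.sqrt_sq (norm_nonneg _)).symm
    _ ≤ Real.sqrt (((‖u‖ + ‖v‖) / (1 + ‖u‖ * ‖v‖)) ^ 2) := Real.sqrt_le_sqrt h7
    _ = (‖u‖ + ‖v‖) / (1 + ‖u‖ * ‖v‖) := Real.sqrt_sq hT0

lemma CSlem (v m m' : EuclideanSpace ℝ (Fin n)) (hv : ‖v‖ < 1) :
    (⟪m, m'⟫ - ⟪v, m⟫ * ⟪v, m'⟫) ^ 2 ≤
      (‖m‖ ^ 2 - ⟪v, m⟫ ^ 2) * (‖m'‖ ^ 2 - ⟪v, m'⟫ ^ 2) := by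
  by_cases hm' : m' = 0
  · simp [hm']
  · have hq' : 0 < ‖m'‖ ^ 2 - ⟪v, m'⟫ ^ 2 := by
      have hb := real_inner_mul_inner_self_le v m'
      rw [real_inner_self_eq_norm_sq, real_inner_self_eq_norm_sq] at hb
      have h2 : 0 < ‖m'‖ := norm_pos_iff.2 hm'
      have hv2 : ‖v‖ ^ 2 < 1 := by nlinarith [norm_nonneg v]
      have h3 : ‖v‖ ^ 2 * ‖m'‖ ^ 2 < ‖m'‖ ^ 2 := by nlinarith [pow_pos h2 2]
      nlinarith [hb, h3]
    set qn := ‖m'‖ ^ 2 - ⟪v, m'⟫ ^ 2 with hqn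
    set Q := ⟪m, m'⟫ - ⟪v, m⟫ * ⟪v, m'⟫ with hQ
    set z := qn • m - Q • m' with hz
    have h1 : 0 ≤ ‖z‖ ^ 2 - ⟪v, z⟫ ^ 2 := by
      have hb := real_inner_mul_inner_self_le v z
      rw [real_inner_self_eq_norm_sq, real_inner_self_eq_norm_sq] at hb
      have hv2 : ‖v‖ ^ 2 ≤ 1 := by nlinarith [norm_nonneg v]
      nlinarith [hb, hv2, sq_nonneg ‖z‖]
    have h2 : ‖z‖ ^ 2 = qn ^ 2 * ‖m‖ ^ 2 - 2 * qn * Q * ⟪m, m'⟫ + Q ^ 2 * ‖m'‖ ^ 2 := by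
      rw [hz]
      simp only [norm_sub_sq_real, norm_smul, Real.norm_eq_abs, real_inner_smul_left,
        real_inner_smul_right, mul_pow, sq_abs]
      ring
    have h3 : ⟪v, z⟫ = qn * ⟪v, m⟫ - Q * ⟪v, m'⟫ := by
      rw [hz]
      simp only [inner_sub_right, real_inner_smul_right]
    rw [h2, h3] at h1
    have hE : qn ^ 2 * ‖m‖ ^ 2 - 2 * qn * Q * ⟪m, m'⟫ + Q ^ 2 * ‖m'‖ ^ 2 -
        (qn * ⟪v, m⟫ - Q * ⟪v, m'⟫) ^ 2 =
        qn * ((‖m‖ ^ 2 - ⟪v, m⟫ ^ 2) * qn - Q ^ 2) := by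
      rw [hqn, hQ]; ring
    rw [hE] at h1
    nlinarith [h1, hq']
lemma neg_le_of_sq_le_sq (a b : ℝ) (h : a ^ 2 ≤ b ^ 2) (hb : 0 ≤ b) : -b ≤ a := by
  nlinarith [sq_nonneg (a + b)]

lemma le_of_sq_le_sq'' (a b : ℝ) (h : a ^ 2 ≤ b ^ 2) (hb : 0 ≤ b) : a ≤ b := by
  nlinarith [sq_nonneg (a - b)]

set_option maxHeartbeats 400000 in
lemma dtri (u v w : EuclideanSpace ℝ (Fin n)) (hu : ‖u‖ < 1) (hv : ‖v‖ < 1)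
    (hw : ‖w‖ < 1) :
    ‖einsteinAdd (-u) w‖ ≤ ‖einsteinAdd (-u) v‖ + ‖einsteinAdd (-v) w‖ := by
  have hnu : ‖-u‖ < 1 := by rwa [norm_neg]
  have hnv : ‖-v‖ < 1 := by rwa [norm_neg]
  have hz1 : ‖einsteinAdd (-u) w‖ < 1 := eadd_norm_lt_one (-u) w hnu hw
  set x := ‖einsteinAdd (-u) v‖ with hxdef
  set y := ‖einsteinAdd (-v) w‖ with hydef
  set z := ‖einsteinAdd (-u) w‖ with hzdef
  have hx0 : 0 ≤ x := norm_nonneg _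
  have hy0 : 0 ≤ y := norm_nonneg _
  have hz0 : 0 ≤ z := norm_nonneg _
  have hx := L1 (-u) v hnu hv
  rw [norm_neg, inner_neg_left, ← hxdef] at hx
  have hy := L1 (-v) w hnv hw
  rw [norm_neg, inner_neg_left, ← hydef] at hy
  have hz := L1 (-u) w hnu hw
  rw [norm_neg, inner_neg_left, ← hzdef] at hz
  clear_value x y z
  have hz2 : 0 ≤ 1 - z ^ 2 := by nlinarith [hz0]
  have hp : 0 < 1 - ⟪u, v⟫ := by
    have h := one_add_inner_pos (-u) v hnu hv
    rw [inner_neg_left] at h; linarith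
  have hq : 0 < 1 - ⟪v, w⟫ := by
    have h := one_add_inner_pos (-v) w hnv hw
    rw [inner_neg_left] at h; linarith
  have ht : 0 < 1 - ⟪u, w⟫ := by
    have h := one_add_inner_pos (-u) w hnu hw
    rw [inner_neg_left] at h; linarith
  have hBpos : 0 < 1 - ‖v‖ ^ 2 := by nlinarith [norm_nonneg v]
  set M := (1 - ‖v‖ ^ 2) • u - (1 - ⟪u, v⟫) • v with hM
  set N := (1 - ‖v‖ ^ 2) • w - (1 - ⟪v, w⟫) • v with hN
  have hqM : ‖M‖ ^ 2 - ⟪v, M⟫ ^ 2 =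
      (1 - ‖v‖ ^ 2) * ((1 - ⟪u, v⟫) ^ 2 - (1 - ‖u‖ ^ 2) * (1 - ‖v‖ ^ 2)) := by
    rw [hM]
    simp only [norm_sub_sq_real, norm_smul, Real.norm_eq_abs, real_inner_smul_left,
      real_inner_smul_right, inner_sub_left, inner_sub_right, real_inner_self_eq_norm_sq,
      mul_pow, sq_abs, real_inner_comm v u]
    ring
  have hqN : ‖N‖ ^ 2 - ⟪v, N⟫ ^ 2 =
      (1 - ‖v‖ ^ 2) * ((1 - ⟪v, w⟫) ^ 2 - (1 - ‖v‖ ^ 2) * (1 - ‖w‖ ^ 2)) := by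
    rw [hN]
    simp only [norm_sub_sq_real, norm_smul, Real.norm_eq_abs, real_inner_smul_left,
      real_inner_smul_right, inner_sub_left, inner_sub_right, real_inner_self_eq_norm_sq,
      mul_pow, sq_abs, real_inner_comm v w]
    ring
  have hQMN : ⟪M, N⟫ - ⟪v, M⟫ * ⟪v, N⟫ =
      (1 - ‖v‖ ^ 2) * ((1 - ⟪u, v⟫) * (1 - ⟪v, w⟫) - (1 - ⟪u, w⟫) * (1 - ‖v‖ ^ 2)) := by
    rw [hM, hN]
    simp only [inner_sub_left, inner_sub_right, real_inner_smul_left, real_inner_smul_right,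
      real_inner_self_eq_norm_sq, real_inner_comm v u, real_inner_comm v w]
    ring
  have hCS := CSlem v M N hv
  rw [hqM, hqN, hQMN] at hCS
  have hF1 : (1 - ⟪u, v⟫) ^ 2 - (1 - ‖u‖ ^ 2) * (1 - ‖v‖ ^ 2) = x ^ 2 * (1 - ⟪u, v⟫) ^ 2 := by
    linear_combination hx
  have hF2 : (1 - ⟪v, w⟫) ^ 2 - (1 - ‖v‖ ^ 2) * (1 - ‖w‖ ^ 2) = y ^ 2 * (1 - ⟪v, w⟫) ^ 2 := by
    linear_combination hy
  rw [hF1, hF2] at hCS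
  have hb' : 0 ≤ (1 - ‖v‖ ^ 2) * (x * (1 - ⟪u, v⟫)) * (y * (1 - ⟪v, w⟫)) :=
    mul_nonneg (mul_nonneg hBpos.le (mul_nonneg hx0 hp.le)) (mul_nonneg hy0 hq.le)
  have hCSb : ((1 - ‖v‖ ^ 2) * ((1 - ⟪u, v⟫) * (1 - ⟪v, w⟫) - (1 - ⟪u, w⟫) * (1 - ‖v‖ ^ 2))) ^ 2
      ≤ ((1 - ‖v‖ ^ 2) * (x * (1 - ⟪u, v⟫)) * (y * (1 - ⟪v, w⟫))) ^ 2 := by linarith [hCS]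
  have key2 := neg_le_of_sq_le_sq _ _ hCSb hb'
  have key'' : (1 - ‖v‖ ^ 2) * ((1 - ⟪u, w⟫) * (1 - ‖v‖ ^ 2)) ≤
      (1 - ‖v‖ ^ 2) * ((1 - ⟪u, v⟫) * (1 - ⟪v, w⟫) * (1 + x * y)) := by linarith [key2]
  have key := le_of_mul_le_mul_left key'' hBpos
  have s1 : ((1 - ⟪u, w⟫) * (1 - ‖v‖ ^ 2)) ^ 2 ≤
      ((1 - ⟪u, v⟫) * (1 - ⟪v, w⟫) * (1 + x * y)) ^ 2 :=
    pow_le_pow_left₀ (mul_nonneg ht.le hBpos.le) key 2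
  have s2 : (1 - x ^ 2) * (1 - y ^ 2) * ((1 - ⟪u, v⟫) * (1 - ⟪v, w⟫)) ^ 2 =
      ((1 - ‖u‖ ^ 2) * (1 - ‖v‖ ^ 2)) * ((1 - ‖v‖ ^ 2) * (1 - ‖w‖ ^ 2)) := by
    linear_combination (1 - y ^ 2) * (1 - ⟪v, w⟫) ^ 2 * hx + (1 - ‖u‖ ^ 2) * (1 - ‖v‖ ^ 2) * hy
  have s3 : (1 - z ^ 2) * ((1 - ⟪u, w⟫) * (1 - ‖v‖ ^ 2)) ^ 2 =
      (1 - ‖u‖ ^ 2) * (1 - ‖w‖ ^ 2) * (1 - ‖v‖ ^ 2) ^ 2 := by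
    linear_combination (1 - ‖v‖ ^ 2) ^ 2 * hz
  have s4' := mul_le_mul_of_nonneg_left s1 hz2
  have hK : 0 < ((1 - ⟪u, v⟫) * (1 - ⟪v, w⟫)) ^ 2 := pow_pos (mul_pos hp hq) 2
  have c1 : (1 - x ^ 2) * (1 - y ^ 2) * ((1 - ⟪u, v⟫) * (1 - ⟪v, w⟫)) ^ 2 ≤
      (1 - z ^ 2) * (1 + x * y) ^ 2 * ((1 - ⟪u, v⟫) * (1 - ⟪v, w⟫)) ^ 2 := by
    linarith [s4', s2, s3]
  have s5 : (1 - x ^ 2) * (1 - y ^ 2) ≤ (1 - z ^ 2) * (1 + x * y) ^ 2 :=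
    le_of_mul_le_mul_right c1 hK
  have s6 : (z * (1 + x * y)) ^ 2 ≤ (x + y) ^ 2 := by linarith [s5]
  have s7 : z * (1 + x * y) ≤ x + y :=
    le_of_sq_le_sq'' _ _ s6 (by linarith)
  linarith [s7, mul_nonneg (mul_nonneg hz0 hx0) hy0]

lemma de_symm (u v : EuclideanSpace ℝ (Fin n)) (hu : ‖u‖ < 1) (hv : ‖v‖ < 1) :
    ‖einsteinAdd (-u) v‖ = ‖einsteinAdd (-v) u‖ := by
  have hnu : ‖-u‖ < 1 := by rwa [norm_neg]
  have hnv : ‖-v‖ < 1 := by rwa [norm_neg]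
  have h1 := L1 (-u) v hnu hv
  rw [norm_neg, inner_neg_left] at h1
  have h2 := L1 (-v) u hnv hu
  rw [norm_neg, inner_neg_left] at h2
  have hc : ⟪v, u⟫ = ⟪u, v⟫ := real_inner_comm u v
  rw [hc] at h2
  have hp : 0 < 1 - ⟪u, v⟫ := by
    have h := one_add_inner_pos (-u) v hnu hv
    rw [inner_neg_left] at h; linarith
  have h3 : (‖einsteinAdd (-u) v‖ ^ 2 - ‖einsteinAdd (-v) u‖ ^ 2) * (1 + -⟪u, v⟫) ^ 2 = 0 := by
    linear_combination h2 - h1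
  rcases mul_eq_zero.1 h3 with h4 | h4
  · have h5 : ‖einsteinAdd (-u) v‖ ^ 2 = ‖einsteinAdd (-v) u‖ ^ 2 := by linarith
    rw [← Real.sqrt_sq (norm_nonneg (einsteinAdd (-u) v)), h5,
      Real.sqrt_sq (norm_nonneg _)]
  · exfalso
    have : (1 + -⟪u, v⟫) ^ 2 > 0 := pow_pos (by linarith) 2
    linarith

lemma de_eq_zero_iff (u v : EuclideanSpace ℝ (Fin n)) (hu : ‖u‖ < 1) (hv : ‖v‖ < 1) :
    ‖einsteinAdd (-u) v‖ = 0 ↔ u = v := by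
  have hnu : ‖-u‖ < 1 := by rwa [norm_neg]
  constructor
  · intro h0
    have hL := L1 (-u) v hnu hv
    rw [norm_neg, inner_neg_left, h0] at hL
    have hsub : ‖u - v‖ ^ 2 = ‖u‖ ^ 2 - 2 * ⟪u, v⟫ + ‖v‖ ^ 2 := norm_sub_sq_real u v
    have hD : 0 ≤ (‖u‖ ^ 2 + ‖v‖ ^ 2) / 2 - ⟪u, v⟫ := by
      nlinarith [real_inner_le_norm u v, sq_nonneg (‖u‖ - ‖v‖)]
    have hT : 0 < 1 - (‖u‖ ^ 2 + ‖v‖ ^ 2) / 2 := by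
      nlinarith [norm_nonneg u, norm_nonneg v]
    have h5 : ‖u - v‖ ^ 2 ≤ 0 := by
      nlinarith [hL, hsub, hD, hT, sq_nonneg (‖u‖ ^ 2 - ‖v‖ ^ 2)]
    have h6 : ‖u - v‖ = 0 := le_antisymm (by nlinarith [norm_nonneg (u - v)]) (norm_nonneg _)
    exact sub_eq_zero.1 (norm_eq_zero.1 h6)
  · intro h; subst h
    have hL := L1 (-u) u hnu hu
    rw [norm_neg, inner_neg_left, real_inner_self_eq_norm_sq] at hL
    have hA : ‖u‖ ^ 2 < 1 := by nlinarith [norm_nonneg u]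
    have h7 : ‖einsteinAdd (-u) u‖ ^ 2 * (1 - ‖u‖ ^ 2) ^ 2 = 0 := by
      linear_combination -hL
    rcases mul_eq_zero.1 h7 with h8 | h8
    · exact pow_eq_zero_iff (two_ne_zero) |>.1 h8
    · exfalso
      have : (1 - ‖u‖ ^ 2) ^ 2 > 0 := pow_pos (by linarith) 2
      linarith

end Aux

/-- The Euclidean norm is a gyronorm on the Einstein gyrogroup; in particular
`‖u ⊕_E v‖ ≤ (‖u‖ + ‖v‖)/(1 + ‖u‖‖v‖) ≤ ‖u‖ + ‖v‖` for all `u, v ∈ 𝔹`, and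
consequently the Einstein gyrometric `d_e(u,v) = ‖(−u) ⊕_E v‖` is a metric on the
open unit ball `𝔹` of `ℝⁿ`. -/
theorem euclidean_norm_gyronorm_einstein (n : ℕ)
    (de : EuclideanSpace ℝ (Fin n) → EuclideanSpace ℝ (Fin n) → ℝ)
    (hde : ∀ u v, de u v = ‖einsteinAdd (-u) v‖) :
    (∀ u v : EuclideanSpace ℝ (Fin n), ‖u‖ < 1 → ‖v‖ < 1 →
      ‖einsteinAdd u v‖ ≤ (‖u‖ + ‖v‖) / (1 + ‖u‖ * ‖v‖) ∧
      (‖u‖ + ‖v‖) / (1 + ‖u‖ * ‖v‖) ≤ ‖u‖ + ‖v‖) ∧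
    (∀ u v w : EuclideanSpace ℝ (Fin n), ‖u‖ < 1 → ‖v‖ < 1 → ‖w‖ < 1 →
      ‖einsteinGyr u v w‖ = ‖w‖) ∧
    (∀ u v : EuclideanSpace ℝ (Fin n), ‖u‖ < 1 → ‖v‖ < 1 → 0 ≤ de u v) ∧
    (∀ u v : EuclideanSpace ℝ (Fin n), ‖u‖ < 1 → ‖v‖ < 1 → (de u v = 0 ↔ u = v)) ∧
    (∀ u v : EuclideanSpace ℝ (Fin n), ‖u‖ < 1 → ‖v‖ < 1 → de u v = de v u) ∧
    (∀ u v w : EuclideanSpace ℝ (Fin n), ‖u‖ < 1 → ‖v‖ < 1 → ‖w‖ < 1 →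
      de u w ≤ de u v + de v w) := by
  refine ⟨fun u v hu hv => ⟨part1a u v hu hv,
      div_le_self (by positivity)
        (by nlinarith [mul_nonneg (norm_nonneg u) (norm_nonneg v)])⟩,
    fun u v w hu hv hw => gyr_norm u v w hu hv hw,
    fun u v hu hv => by rw [hde]; exact norm_nonneg _,
    fun u v hu hv => by rw [hde]; exact de_eq_zero_iff u v hu hv,
    fun u v hu hv => by rw [hde u v, hde v u]; exact de_symm u v hu hv,
    fun u v w hu hv hw => by
      rw [hde u w, hde u v, hde v w]; exact dtri u v w hu hv hw⟩
end

section
/- Let G be a gyrogroup with a gyronorm and gyronorm metric d(x,y) = ‖⊖x ⊕ y‖. Then G is homogeneous: for all x, y ∈ G there exists a surjective isometry T : G → G of (G, d) with T(x) = y (one may take T = L_y ∘ L_{⊖x}, the composition of the left gyrotranslations by ⊖x and then by y). -/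
section Aux
variable {G : Type*} (gg : Gyrogroup G)

lemma gy_add_left_inj (a : G) {u v : G} (h : gg.add a u = gg.add a v) : u = v := by
  have h2 : gg.add (gg.neg a) (gg.add a u) = gg.add (gg.neg a) (gg.add a v) := by rw [h]
  rw [gg.left_gyroassoc, gg.left_gyroassoc, gg.neg_add, gg.e_add, gg.e_add] at h2
  exact (gg.gyr_bijective _ _).1 h2

lemma gy_gyr_e (a c : G) : gg.gyr gg.e a c = c := by
  apply gy_add_left_inj gg a
  have := gg.left_gyroassoc gg.e a c
  rw [gg.e_add, gg.e_add] at this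
  exact this.symm

lemma gy_gyr_neg_self (a c : G) : gg.gyr (gg.neg a) a c = c := by
  have := gg.left_loop (gg.neg a) a
  rw [gg.neg_add] at this
  rw [← this, gy_gyr_e]

lemma gy_gyr_self_neg (a c : G) : gg.gyr a (gg.neg a) c = c := by
  have := gg.left_loop a (gg.neg a)
  rw [gg.add_neg] at this
  rw [← this, gy_gyr_e]

lemma gy_left_cancel (a b : G) : gg.add (gg.neg a) (gg.add a b) = b := by
  rw [gg.left_gyroassoc, gg.neg_add, gg.e_add, gy_gyr_neg_self]

lemma gy_left_cancel' (a b : G) : gg.add a (gg.add (gg.neg a) b) = b := by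
  rw [gg.left_gyroassoc, gg.add_neg, gg.e_add, gy_gyr_self_neg]

lemma gy_key (a p q : G) :
    gg.add (gg.neg (gg.add a p)) (gg.add a q)
      = gg.gyr a p (gg.add (gg.neg p) q) := by
  have h : gg.add (gg.add a p) (gg.gyr a p (gg.add (gg.neg p) q)) = gg.add a q := by
    rw [← gg.left_gyroassoc, gy_left_cancel']
  calc gg.add (gg.neg (gg.add a p)) (gg.add a q)
      = gg.add (gg.neg (gg.add a p)) (gg.add (gg.add a p) (gg.gyr a p (gg.add (gg.neg p) q))) := by rw [h]
    _ = _ := gy_left_cancel gg _ _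

end Aux

/-- A normed gyrogroup is homogeneous: any point can be mapped to any other point by a
surjective isometry of the gyronorm metric, namely `T = L_y ∘ L_{⊖x}`. -/
theorem normed_gyrogroup_homogeneous {G : Type*} (gg : Gyrogroup G) (nm : Gyronorm gg)
    (d : G → G → ℝ) (hd : ∀ x y, d x y = nm.toFun (gg.add (gg.neg x) y)) :
    ∀ x y : G, ∃ T : G → G, Function.Surjective T ∧
      (∀ p q, d (T p) (T q) = d p q) ∧ T x = y := by
  intro x y
  refine ⟨fun z => gg.add y (gg.add (gg.neg x) z), ?_, ?_, ?_⟩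
  · intro z
    exact ⟨gg.add x (gg.add (gg.neg y) z), by simp only []; rw [gy_left_cancel, gy_left_cancel']⟩
  · intro p q
    rw [hd, hd, gy_key, nm.gyr_eq, gy_key, nm.gyr_eq]
  · simp only []; rw [gg.neg_add, gg.add_e]
end

section
/- Let G be a gyrogroup with a gyronorm and gyronorm metric d(x,y) = ‖⊖x ⊕ y‖, and suppose G is nondegenerate, i.e., some gyroautomorphism gyr[a,b] is not the identity map. Then G is isotropic: for every point p ∈ G there exists a surjective isometry T of (G, d) with T(p) = p and T not equal to the identity map. -/
/-- A nondegenerate normed gyrogroup (one having a nonidentity gyroautomorphism)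
is isotropic: every point is fixed by some nonidentity surjective isometry. -/
theorem normed_gyrogroup_isotropic {G : Type*} (gg : Gyrogroup G) (nm : Gyronorm gg)
    (d : G → G → ℝ) (hd : ∀ x y, d x y = nm.toFun (gg.add (gg.neg x) y))
    (hnd : ∃ a b, gg.gyr a b ≠ id) :
    ∀ p : G, ∃ T : G → G, Function.Surjective T ∧
      (∀ x y, d (T x) (T y) = d x y) ∧ T p = p ∧ T ≠ id := by
  obtain ⟨a, b, hab⟩ := hnd
  intro p
  -- left cancellation
  have lcancel : ∀ u x y : G, gg.add u x = gg.add u y → x = y := by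
    intro u x y h
    have h2 := congrArg (gg.add (gg.neg u)) h
    rw [gg.left_gyroassoc, gg.left_gyroassoc, gg.neg_add, gg.e_add, gg.e_add] at h2
    exact (gg.gyr_bijective _ _).1 h2
  have negneg : ∀ x, gg.neg (gg.neg x) = x := fun x =>
    (lcancel (gg.neg x) _ _ (by rw [gg.add_neg, gg.neg_add])).symm
  have leftcan : ∀ u x, gg.add (gg.neg u) (gg.add u x) = x := by
    intro u x
    rw [gg.left_gyroassoc, gg.neg_add, gg.e_add]
    have h1 : gg.gyr gg.e u = gg.gyr (gg.neg u) u := by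
      have h := gg.left_loop (gg.neg u) u
      rw [gg.neg_add] at h; exact h
    have h2 : gg.gyr gg.e u x = x := by
      have h := gg.left_gyroassoc gg.e u x
      rw [gg.e_add, gg.e_add] at h
      exact (lcancel u _ _ h.symm)
    rw [← h1, h2]
  have rightcan : ∀ u x, gg.add u (gg.add (gg.neg u) x) = x := by
    intro u x
    have h := leftcan (gg.neg u) x
    rwa [negneg] at h
  have gyr_e : ∀ u v, gg.gyr u v gg.e = gg.e := by
    intro u v
    have h : gg.gyr u v (gg.add gg.e gg.e) = gg.add (gg.gyr u v gg.e) (gg.gyr u v gg.e) :=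
      gg.gyr_add u v gg.e gg.e
    rw [gg.e_add] at h
    have h2 : gg.add (gg.gyr u v gg.e) gg.e = gg.add (gg.gyr u v gg.e) (gg.gyr u v gg.e) := by
      rw [gg.add_e]; exact h
    exact (lcancel _ _ _ h2).symm
  have gyr_neg : ∀ u v x, gg.gyr u v (gg.neg x) = gg.neg (gg.gyr u v x) := by
    intro u v x
    have h : gg.add (gg.gyr u v x) (gg.gyr u v (gg.neg x)) = gg.e := by
      rw [← gg.gyr_add, gg.add_neg, gyr_e]
    have h2 : gg.add (gg.gyr u v x) (gg.gyr u v (gg.neg x))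
        = gg.add (gg.gyr u v x) (gg.neg (gg.gyr u v x)) := by
      rw [h, gg.add_neg]
    exact lcancel _ _ _ h2
  -- key translation identity
  have key : ∀ u x y, gg.add (gg.neg (gg.add u x)) (gg.add u y)
      = gg.gyr u x (gg.add (gg.neg x) y) := by
    intro u x y
    have h1 : gg.add u y = gg.add (gg.add u x) (gg.gyr u x (gg.add (gg.neg x) y)) := by
      rw [← gg.left_gyroassoc, rightcan]
    rw [h1, leftcan]
  refine ⟨fun x => gg.add p (gg.gyr a b (gg.add (gg.neg p) x)), ?_, ?_, ?_, ?_⟩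
  · intro y
    obtain ⟨c, hc⟩ := (gg.gyr_bijective a b).2 (gg.add (gg.neg p) y)
    exact ⟨gg.add p c, by show gg.add p (gg.gyr a b (gg.add (gg.neg p) (gg.add p c))) = y; rw [leftcan, hc, rightcan]⟩
  · intro x y
    rw [hd, hd]
    show nm.toFun (gg.add (gg.neg (gg.add p (gg.gyr a b (gg.add (gg.neg p) x)))) (gg.add p (gg.gyr a b (gg.add (gg.neg p) y)))) = _
    rw [key, nm.gyr_eq, ← gyr_neg, ← gg.gyr_add, nm.gyr_eq, key, nm.gyr_eq]
  · show gg.add p (gg.gyr a b (gg.add (gg.neg p) p)) = p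
    rw [gg.neg_add, gyr_e, gg.add_e]
  · intro h
    apply hab
    funext c
    have h2 := congrFun h (gg.add p c)
    simp only [id] at h2
    rw [leftcan] at h2
    have h3 : gg.add p (gg.gyr a b c) = gg.add p c := h2
    exact lcancel _ _ _ h3
end

section
/- Let G be a gyrogroup equipped with a metric d that is invariant under left gyrotranslation: d(a ⊕ x, a ⊕ y) = d(x, y) for all a, x, y ∈ G. Then ‖x‖ := d(e, x) defines a gyronorm on G, and the gyronorm metric it induces coincides with d: d(x, y) = ‖⊖x ⊕ y‖ for all x, y ∈ G. -/
-- auxiliary lemmas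
theorem Gyrogroup.add_left_cancel {G : Type*} (gg : Gyrogroup G) (a : G) {x y : G}
    (h : gg.add a x = gg.add a y) : x = y := by
  have h2 : gg.add (gg.neg a) (gg.add a x) = gg.add (gg.neg a) (gg.add a y) := by rw [h]
  rw [gg.left_gyroassoc, gg.left_gyroassoc, gg.neg_add, gg.e_add, gg.e_add] at h2
  exact (gg.gyr_bijective _ _).1 h2

theorem Gyrogroup.gyr_e_left {G : Type*} (gg : Gyrogroup G) (b c : G) :
    gg.gyr gg.e b c = c := by
  have h := gg.left_gyroassoc gg.e b c
  rw [gg.e_add, gg.e_add] at h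
  exact (gg.add_left_cancel b h.symm)

theorem Gyrogroup.gyr_neg_right {G : Type*} (gg : Gyrogroup G) (a c : G) :
    gg.gyr a (gg.neg a) c = c := by
  have h := gg.left_loop a (gg.neg a)
  rw [gg.add_neg] at h
  rw [← h, gg.gyr_e_left]

theorem Gyrogroup.add_neg_cancel_left {G : Type*} (gg : Gyrogroup G) (x y : G) :
    gg.add x (gg.add (gg.neg x) y) = y := by
  rw [gg.left_gyroassoc, gg.add_neg, gg.e_add, gg.gyr_neg_right]


/-- If a gyrogroup carries a metric `d` invariant under left gyrotranslations, then
`‖x‖ := d(e, x)` is a gyronorm whose induced gyronorm metric coincides with `d`. -/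
theorem left_invariant_metric_gives_gyronorm {G : Type*} (gg : Gyrogroup G)
    (d : G → G → ℝ)
    (hnonneg : ∀ x y, 0 ≤ d x y)
    (heq : ∀ x y, d x y = 0 ↔ x = y)
    (hsymm : ∀ x y, d x y = d y x)
    (htri : ∀ x y z, d x z ≤ d x y + d y z)
    (hinv : ∀ a x y, d (gg.add a x) (gg.add a y) = d x y) :
    ∃ nm : Gyronorm gg, (∀ x, nm.toFun x = d gg.e x) ∧
      (∀ x y, d x y = nm.toFun (gg.add (gg.neg x) y)) := by
  have key : ∀ x y : G, d x y = d gg.e (gg.add (gg.neg x) y) := by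
    intro x y
    have := hinv x gg.e (gg.add (gg.neg x) y)
    rw [gg.add_e, gg.add_neg_cancel_left] at this
    exact this
  refine ⟨⟨fun x => d gg.e x, fun x => hnonneg _ _, fun x => by rw [heq]; exact eq_comm,
    ?_, ?_, ?_⟩, fun x => rfl, ?_⟩
  · intro x
    show d gg.e (gg.neg x) = d gg.e x
    have := hinv x gg.e (gg.neg x)
    rw [gg.add_e, gg.add_neg] at this
    rw [← this, hsymm]
  · intro x y
    show d gg.e (gg.add x y) ≤ d gg.e x + d gg.e y
    calc d gg.e (gg.add x y) ≤ d gg.e x + d x (gg.add x y) := htri _ _ _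
      _ = d gg.e x + d gg.e y := by
          have := hinv x gg.e y
          rw [gg.add_e] at this
          rw [this]
  · intro a b x
    show d gg.e (gg.gyr a b x) = d gg.e x
    have h1 := hinv (gg.add a b) gg.e (gg.gyr a b x)
    rw [gg.add_e, ← gg.left_gyroassoc] at h1
    have h2 := hinv a b (gg.add b x)
    have h3 := hinv b gg.e x
    rw [gg.add_e] at h3
    simp only [← h1, h2, h3]
  · intro x y
    exact key x y
end

section
/- Let G be a gyrogroup with a gyronorm and gyronorm metric d(x,y) = ‖⊖x ⊕ y‖. Then the following are equivalent: (I) the right-gyrotranslation inequality d(x ⊕ a, y ⊕ a) ≤ d(x, y) holds for all a, x, y ∈ G; (II) Klee's condition d(x ⊕ y, a ⊕ b) ≤ d(x, a) + d(y, b) holds for all a, b, x, y ∈ G. -/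
namespace Gyrogroup

variable {G : Type*} (gg : Gyrogroup G)

theorem add_left_injective (b : G) : Function.Injective (gg.add b) := by
  intro x y h
  have h2 : gg.add (gg.neg b) (gg.add b x) = gg.add (gg.neg b) (gg.add b y) := by rw [h]
  rw [gg.left_gyroassoc, gg.left_gyroassoc, gg.neg_add, gg.e_add, gg.e_add] at h2
  exact (gg.gyr_bijective _ _).1 h2

theorem gyr_e_left_s13 (b c : G) : gg.gyr gg.e b c = c := by
  apply gg.add_left_injective b
  have := gg.left_gyroassoc gg.e b c
  rw [gg.e_add, gg.e_add] at this
  exact this.symm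

theorem gyr_neg_self (a c : G) : gg.gyr a (gg.neg a) c = c := by
  have := gg.left_loop a (gg.neg a)
  rw [gg.add_neg] at this
  rw [← this, gg.gyr_e_left_s13]

theorem left_cancel_s13 (a b : G) : gg.add a (gg.add (gg.neg a) b) = b := by
  rw [gg.left_gyroassoc, gg.add_neg, gg.e_add, gg.gyr_neg_self]

theorem key (x y z : G) :
    gg.add (gg.neg x) z =
      gg.add (gg.add (gg.neg x) y) (gg.gyr (gg.neg x) y (gg.add (gg.neg y) z)) := by
  rw [← gg.left_gyroassoc, gg.left_cancel_s13]

end Gyrogroup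

/-- In a normed gyrogroup, the right-gyrotranslation inequality is equivalent to
Klee's condition. -/
theorem right_gyrotranslation_iff_klee {G : Type*} (gg : Gyrogroup G) (nm : Gyronorm gg)
    (d : G → G → ℝ) (hd : ∀ x y, d x y = nm.toFun (gg.add (gg.neg x) y)) :
    (∀ a x y, d (gg.add x a) (gg.add y a) ≤ d x y) ↔
      (∀ a b x y, d (gg.add x y) (gg.add a b) ≤ d x a + d y b) := by
  have hself : ∀ x, d x x = 0 := by
    intro x
    rw [hd, gg.neg_add, (nm.eq_zero_iff _)]
  have htri : ∀ x y z, d x z ≤ d x y + d y z := by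
    intro x y z
    rw [hd, hd, hd, gg.key x y z]
    calc nm.toFun _ ≤ nm.toFun (gg.add (gg.neg x) y) +
          nm.toFun (gg.gyr (gg.neg x) y (gg.add (gg.neg y) z)) := nm.subadd _ _
      _ = _ := by rw [nm.gyr_eq]
  have hleft : ∀ a y b, d (gg.add a y) (gg.add a b) = d y b := by
    intro a y b
    have h1 : gg.add a b = gg.add (gg.add a y) (gg.gyr a y (gg.add (gg.neg y) b)) := by
      rw [← gg.left_gyroassoc, gg.left_cancel_s13]
    rw [hd, h1, gg.left_gyroassoc, gg.neg_add, gg.e_add, nm.gyr_eq, nm.gyr_eq, hd]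
  constructor
  · intro hI a b x y
    calc d (gg.add x y) (gg.add a b)
        ≤ d (gg.add x y) (gg.add a y) + d (gg.add a y) (gg.add a b) := htri _ _ _
      _ ≤ d x a + d y b := by
          have := hI y x a
          rw [hleft a y b]
          linarith
  · intro hII a x y
    have := hII y a x a
    rw [hself a] at this
    linarith
end

section
/- Let G be a gyrogroup with a gyronorm and gyronorm metric d(x,y) = ‖⊖x ⊕ y‖, and suppose the right-gyrotranslation inequality d(x ⊕ a, y ⊕ a) ≤ d(x, y) holds for all a, x, y ∈ G (equivalently, Klee's condition holds). Then, with respect to the topology induced by d, the gyroaddition map (x, y) ↦ x ⊕ y is continuous from G × G to G, and the inversion map x ↦ ⊖x is an isometry of (G, d) (in particular continuous); hence G is a topological gyrogroup. -/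
/-- If the right-gyrotranslation inequality holds in a normed gyrogroup, then with
respect to the gyronorm metric the gyroaddition is (jointly) continuous, expressed in
ε–δ form for the product of the metric topologies, and the inversion map is an
isometry (in particular continuous); hence `G` is a topological gyrogroup. -/
theorem normed_gyrogroup_topological {G : Type*} (gg : Gyrogroup G) (nm : Gyronorm gg)
    (d : G → G → ℝ) (hd : ∀ x y, d x y = nm.toFun (gg.add (gg.neg x) y))
    (hright : ∀ a x y, d (gg.add x a) (gg.add y a) ≤ d x y) :
    (∀ x y : G, ∀ ε > (0 : ℝ), ∃ δ > (0 : ℝ), ∀ a b : G,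
        d x a < δ → d y b < δ → d (gg.add x y) (gg.add a b) < ε) ∧
    (∀ x y : G, d (gg.neg x) (gg.neg y) = d x y) := by
  have hinj : ∀ a b : G, Function.Injective (gg.gyr a b) :=
    fun a b => (gg.gyr_bijective a b).1
  have pre : ∀ a z, gg.add (gg.neg a) (gg.add a z) = gg.gyr (gg.neg a) a z := by
    intro a z
    rw [gg.left_gyroassoc, gg.neg_add, gg.e_add]
  have gyr_e : ∀ a c, gg.gyr gg.e a c = c := by
    intro a c
    have h1 : gg.add a (gg.gyr gg.e a c) = gg.add a c := by
      calc gg.add a (gg.gyr gg.e a c)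
          = gg.add (gg.add gg.e a) (gg.gyr gg.e a c) := by rw [gg.e_add]
        _ = gg.add gg.e (gg.add a c) := (gg.left_gyroassoc gg.e a c).symm
        _ = gg.add a c := gg.e_add _
    apply hinj (gg.neg a) a
    rw [← pre, ← pre, h1]
  have gyr_neg : ∀ a c, gg.gyr (gg.neg a) a c = c := by
    intro a c
    have h := gg.left_loop (gg.neg a) a
    rw [gg.neg_add] at h
    rw [← h]; exact gyr_e a c
  have left_cancel : ∀ a x, gg.add (gg.neg a) (gg.add a x) = x := by
    intro a x
    rw [gg.left_gyroassoc, gg.neg_add, gg.e_add, gyr_neg]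
  have cancel2 : ∀ a x, gg.add a (gg.add (gg.neg a) x) = x := by
    intro a x
    have h := gg.left_loop a (gg.neg a)
    rw [gg.add_neg] at h
    rw [gg.left_gyroassoc, gg.add_neg, gg.e_add, ← h, gyr_e]
  have neg_neg : ∀ a, gg.neg (gg.neg a) = a := by
    intro a
    have h := left_cancel (gg.neg a) a
    rwa [gg.neg_add, gg.add_e] at h
  have neg_unique : ∀ z w, gg.add z w = gg.e → w = gg.neg z := by
    intro z w h
    have h2 := left_cancel z w
    rw [h, gg.add_e] at h2
    exact h2.symm
  have gyrator : ∀ a b c,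
      gg.gyr a b c = gg.add (gg.neg (gg.add a b)) (gg.add a (gg.add b c)) := by
    intro a b c
    rw [gg.left_gyroassoc a b c, left_cancel]
  have key : ∀ x y b,
      gg.add (gg.neg (gg.add x y)) (gg.add x b) = gg.gyr x y (gg.add (gg.neg y) b) := by
    intro x y b
    rw [gyrator, cancel2]
  have neg_add_rev : ∀ a b,
      gg.neg (gg.add a b) = gg.gyr a b (gg.add (gg.neg b) (gg.neg a)) := by
    intro a b
    have h : gg.add (gg.add a b) (gg.gyr a b (gg.add (gg.neg b) (gg.neg a))) = gg.e := by
      rw [← gg.left_gyroassoc, cancel2, gg.add_neg]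
    exact (neg_unique _ _ h).symm
  have dtri : ∀ u v w, d u w ≤ d u v + d v w := by
    intro u v w
    rw [hd, hd, hd]
    have h : gg.add (gg.neg u) w
        = gg.add (gg.add (gg.neg u) v) (gg.gyr (gg.neg u) v (gg.add (gg.neg v) w)) := by
      rw [← gg.left_gyroassoc, cancel2]
    rw [h]
    calc nm.toFun _
        ≤ nm.toFun (gg.add (gg.neg u) v)
          + nm.toFun (gg.gyr (gg.neg u) v (gg.add (gg.neg v) w)) := nm.subadd _ _
      _ = _ := by rw [nm.gyr_eq]
  have dleft : ∀ x y b, d (gg.add x y) (gg.add x b) = d y b := by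
    intro x y b
    rw [hd, hd, key, nm.gyr_eq]
  constructor
  · intro x y ε hε
    refine ⟨ε / 2, by positivity, fun a b ha hb => ?_⟩
    calc d (gg.add x y) (gg.add a b)
        ≤ d (gg.add x y) (gg.add x b) + d (gg.add x b) (gg.add a b) := dtri _ _ _
      _ = d y b + d (gg.add x b) (gg.add a b) := by rw [dleft]
      _ ≤ d y b + d x a := add_le_add_right (hright b x a) _
      _ < ε := by linarith
  · have hle : ∀ x y : G, d (gg.neg x) (gg.neg y) ≤ d x y := by
      intro x y
      have h := hright (gg.neg y) x y
      rw [gg.add_neg] at h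
      have h2 : d (gg.neg x) (gg.neg y) = d (gg.add x (gg.neg y)) gg.e := by
        rw [hd, hd, neg_neg, gg.add_e, nm.neg_eq]
      rw [h2]; exact h
    intro x y
    have h := hle (gg.neg x) (gg.neg y)
    rw [neg_neg, neg_neg] at h
    exact le_antisymm (hle x y) h
end
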